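/- Let b > 0, t > 0 be reals, p ≥ 1 an integer, η > 0 a real, and N ≥ 1 an integer. Set K := ⌊ηN/(2π)⌋. Then (4π/N) · ∑_{k=1}^{K} exp(−t·b·(2πk/N)^{2p}) ≤ (1/p) · Γ(1/(2p)) · (t·b)^{−1/(2p)}. -/

import Mathlib

open Real MeasureTheory

theorem small_eigenvalue_heat_sum_bound (b t η : ℝ) (hb : 0 < b) (ht : 0 < t) (hη : 0 < η)
    (p : ℕ) (hp : 1 ≤ p) (N : ℕ) (hN : 1 ≤ N) :
    (4 * Real.pi / N) *
        ∑ k ∈ Finset.Icc 1 ⌊η * N / (2 * Real.pi)⌋₊,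
          Real.exp (-(t * b * (2 * Real.pi * k / N) ^ (2 * p))) ≤
      (1 / p) * Real.Gamma (1 / (2 * p)) * (t * b) ^ (-(1 / (2 * (p : ℝ)))) := by
  have hNpos : (0:ℝ) < N := by exact_mod_cast hN
  have hppos : (0:ℝ) < p := by exact_mod_cast hp
  have hπ : (0:ℝ) < Real.pi := Real.pi_pos
  set K := ⌊η * N / (2 * Real.pi)⌋₊ with hK
  set P : ℝ := ((2 * p : ℕ) : ℝ) with hPdef
  have hP : (0:ℝ) < P := by
    rw [hPdef]; exact_mod_cast Nat.mul_pos two_pos (lt_of_lt_of_le one_pos hp)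
  set c : ℝ := t * b * (2 * Real.pi / N) ^ (2 * p) with hc
  have hcpos : 0 < c := by
    apply mul_pos (mul_pos ht hb)
    positivity
  set f : ℝ → ℝ := fun x => Real.exp (-(c * x ^ (2 * p))) with hf
  -- rewrite the sum
  have hsum : ∑ k ∈ Finset.Icc 1 K, Real.exp (-(t * b * (2 * Real.pi * k / N) ^ (2 * p)))
      = ∑ i ∈ Finset.range K, f (0 + ((i + 1 : ℕ) : ℝ)) := by
    rw [show Finset.Icc 1 K = Finset.Ico 1 (K + 1) by rw [Finset.Ico_add_one_right_eq_Icc],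
      Finset.sum_Ico_eq_sum_range]
    simp only [Nat.add_sub_cancel]
    refine Finset.sum_congr rfl fun i _ => ?_
    simp only [hf, zero_add]
    congr 1
    have hNne : (N:ℝ) ≠ 0 := ne_of_gt hNpos
    push_cast
    rw [show 2 * Real.pi * (1 + (i:ℝ)) / N = 2 * Real.pi / N * ((i:ℝ) + 1) by ring, mul_pow]
    ring
  -- antitone
  have hanti : AntitoneOn f (Set.Icc (0:ℝ) (0 + K)) := by
    intro x hx y hy hxy
    simp only [hf]
    apply Real.exp_le_exp.2
    apply neg_le_neg
    apply mul_le_mul_of_nonneg_left _ hcpos.le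
    exact pow_le_pow_left₀ hx.1 hxy _
  have h1 : ∑ i ∈ Finset.range K, f (0 + ((i + 1 : ℕ) : ℝ)) ≤ ∫ x in (0:ℝ)..(0 + K), f x :=
    hanti.sum_le_integral
  -- integrability on Ioi 0
  have hint : IntegrableOn f (Set.Ioi (0:ℝ)) := by
    have := integrableOn_rpow_mul_exp_neg_mul_rpow (p := P) (s := 0) (b := c)
      (by norm_num) (by rw [hPdef]; exact_mod_cast Nat.one_le_iff_ne_zero.2 (by positivity)) hcpos
    refine this.congr_fun (fun x hx => ?_) measurableSet_Ioi
    simp only [hf, Real.rpow_zero, one_mul, hPdef, Real.rpow_natCast, neg_mul]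
  -- bound interval integral by Ioi integral
  have h2 : ∫ x in (0:ℝ)..(0 + K), f x ≤ ∫ x in Set.Ioi (0:ℝ), f x := by
    rw [intervalIntegral.integral_of_le (by positivity), zero_add]
    apply setIntegral_mono_set hint
    · filter_upwards with x using Real.exp_nonneg _
    · exact HasSubset.Subset.eventuallyLE Set.Ioc_subset_Ioi_self
  -- value of the integral
  have h3 : ∫ x in Set.Ioi (0:ℝ), f x = c ^ (-1 / P) * Real.Gamma (1 / P + 1) := by
    rw [← integral_exp_neg_mul_rpow hP hcpos]
    refine setIntegral_congr_fun measurableSet_Ioi (fun x hx => ?_)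
    simp only [hf, hPdef, Real.rpow_natCast, neg_mul]
  -- put it together
  have key : ∑ k ∈ Finset.Icc 1 K, Real.exp (-(t * b * (2 * Real.pi * k / N) ^ (2 * p)))
      ≤ c ^ (-1 / P) * Real.Gamma (1 / P + 1) := by
    rw [hsum, ← h3]; exact h1.trans h2
  have hc_rpow : c ^ (-1 / P) = (t * b) ^ (-(1 / (2 * (p:ℝ)))) * (N / (2 * Real.pi)) := by
    have h2πN : (0:ℝ) < 2 * Real.pi / N := by positivity
    have : c = (t * b) * ((2 * Real.pi / N) ^ P) := by
      rw [hc, hPdef, Real.rpow_natCast]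
    have hPneg : (-1 : ℝ)/P = -(1/(2*(p:ℝ))) := by rw [hPdef]; push_cast; ring
    have hexp : P * (-1/P) = -1 := by field_simp
    rw [this, Real.mul_rpow (by positivity) (by positivity), ← Real.rpow_mul h2πN.le,
      hexp, Real.rpow_neg_one, inv_div, hPneg]
  have hGamma : Real.Gamma (1 / P + 1) = (1 / P) * Real.Gamma (1 / P) :=
    Real.Gamma_add_one (by positivity)
  have hPeq : (1:ℝ) / P = 1 / (2 * (p:ℝ)) := by rw [hPdef]; push_cast; ring_nf
  calc (4 * Real.pi / N) *
        ∑ k ∈ Finset.Icc 1 K, Real.exp (-(t * b * (2 * Real.pi * k / N) ^ (2 * p)))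
      ≤ (4 * Real.pi / N) * (c ^ (-1 / P) * Real.Gamma (1 / P + 1)) := by
        apply mul_le_mul_of_nonneg_left key (by positivity)
    _ = (1 / p) * Real.Gamma (1 / (2 * p)) * (t * b) ^ (-(1 / (2 * (p : ℝ)))) := by
        rw [hc_rpow, hGamma, hPeq]
        have hπne : Real.pi ≠ 0 := ne_of_gt hπ
        have hNne : (N:ℝ) ≠ 0 := ne_of_gt hNpos
        have hpne : (p:ℝ) ≠ 0 := ne_of_gt hppos
        field_simp
        ring
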